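/- Comparison estimate on a thin annulus: let ρ > 1, 0 < t < 1, c > 0. Let A and Ã be matrix-valued functions, each continuous on {ρ⁻¹t ≤ |z| ≤ ρ} and holomorphic on the interior, each with line integral of its norm over |z| = ρ at most c and over |z| = ρ⁻¹t at most c·t, and such that the line integral of ‖A − Ã‖ over |z| = ρ is at most c·t. Then there is a constant C depending only on c and ρ (and the matrix size) such that ‖A(z) − Ã(z)‖ ≤ C·t/|z| for all z with t ≤ |z| ≤ 1. -/

import Mathlib

open Metric Set

attribute [local instance] Matrix.linftyOpNormedAddCommGroup Matrix.linftyOpNormedRing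
  Matrix.linftyOpNormedSpace

lemma norm_circleIntegral_le_aux {E : Type*} [NormedAddCommGroup E] [NormedSpace ℂ E]
    (g : ℂ → E) {R : ℝ} (hR : 0 ≤ R) :
    ‖∮ w in C(0, R), g w‖ ≤ ∫ θ in (0:ℝ)..(2 * Real.pi), ‖g (circleMap 0 R θ)‖ * R := by
  rw [circleIntegral]
  refine (intervalIntegral.norm_integral_le_integral_norm (by positivity)).trans_eq ?_
  refine intervalIntegral.integral_congr fun θ _ => ?_
  rw [norm_smul, deriv_circleMap, norm_mul, Complex.norm_I, mul_one,
    norm_circleMap_zero, _root_.abs_of_nonneg hR, mul_comm]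

lemma cauchy_bound {E : Type*} [NormedAddCommGroup E] [NormedSpace ℂ E]
    (f : ℂ → E) (z : ℂ) {R m M : ℝ} (hR : 0 < R) (hm : 0 < m)
    (hfc : ContinuousOn f (sphere 0 R))
    (hdist : ∀ θ : ℝ, m ≤ ‖circleMap 0 R θ - z‖)
    (hI : (∫ θ in (0:ℝ)..(2 * Real.pi), ‖f (circleMap 0 R θ)‖ * R) ≤ M) :
    ‖∮ w in C(0, R), (w - z)⁻¹ • f w‖ ≤ m⁻¹ * M := by
  have hne : ∀ θ : ℝ, circleMap 0 R θ - z ≠ 0 := by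
    intro θ h
    have := hdist θ
    rw [h, norm_zero] at this
    linarith
  have hcont1 : Continuous fun θ : ℝ => f (circleMap 0 R θ) :=
    hfc.comp_continuous (continuous_circleMap 0 R) (circleMap_mem_sphere 0 hR.le)
  have hcont2 : Continuous fun θ : ℝ => (circleMap 0 R θ - z)⁻¹ :=
    ((continuous_circleMap 0 R).sub continuous_const).inv₀ hne
  calc ‖∮ w in C(0, R), (w - z)⁻¹ • f w‖
      ≤ ∫ θ in (0:ℝ)..(2 * Real.pi),
          ‖(circleMap 0 R θ - z)⁻¹ • f (circleMap 0 R θ)‖ * R :=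
        norm_circleIntegral_le_aux _ hR.le
    _ ≤ ∫ θ in (0:ℝ)..(2 * Real.pi), m⁻¹ * (‖f (circleMap 0 R θ)‖ * R) := by
        refine intervalIntegral.integral_mono_on (by positivity)
          (((hcont2.smul hcont1).norm.mul continuous_const).intervalIntegrable _ _)
          ((continuous_const.mul (hcont1.norm.mul continuous_const)).intervalIntegrable _ _)
          fun θ _ => ?_
        rw [norm_smul, norm_inv, mul_assoc]
        exact mul_le_mul_of_nonneg_right (inv_anti₀ hm (hdist θ)) (by positivity)
    _ = m⁻¹ * ∫ θ in (0:ℝ)..(2 * Real.pi), ‖f (circleMap 0 R θ)‖ * R :=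
        intervalIntegral.integral_const_mul _ _
    _ ≤ m⁻¹ * M := mul_le_mul_of_nonneg_left hI (by positivity)

set_option maxHeartbeats 1000000 in
/-- comparison Cauchy estimate on the thin annulus
`ρ⁻¹ t ≤ |z| ≤ ρ`: if two holomorphic matrix-valued maps are close on the outer
circle and small on the inner circle, then `‖A z - Ã z‖ ≤ C t / |z|`. -/
theorem comparison_estimate_on_annulus (d : ℕ) (ρ c : ℝ) (hρ : 1 < ρ) (hc : 0 < c) :
    ∃ C : ℝ, ∀ t : ℝ, 0 < t → t < 1 →
      ∀ A B : ℂ → Matrix (Fin d) (Fin d) ℂ,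
        ContinuousOn A {z : ℂ | ρ⁻¹ * t ≤ ‖z‖ ∧ ‖z‖ ≤ ρ} →
        DifferentiableOn ℂ A
          {z : ℂ | ρ⁻¹ * t < ‖z‖ ∧ ‖z‖ < ρ} →
        ContinuousOn B {z : ℂ | ρ⁻¹ * t ≤ ‖z‖ ∧ ‖z‖ ≤ ρ} →
        DifferentiableOn ℂ B
          {z : ℂ | ρ⁻¹ * t < ‖z‖ ∧ ‖z‖ < ρ} →
        (∫ θ in (0:ℝ)..(2 * Real.pi),
            ‖A ((ρ : ℂ) * Complex.exp (θ * Complex.I))‖ * ρ) ≤ c →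
        (∫ θ in (0:ℝ)..(2 * Real.pi),
            ‖A (((ρ⁻¹ * t : ℝ) : ℂ) * Complex.exp (θ * Complex.I))‖ * (ρ⁻¹ * t))
          ≤ c * t →
        (∫ θ in (0:ℝ)..(2 * Real.pi),
            ‖B ((ρ : ℂ) * Complex.exp (θ * Complex.I))‖ * ρ) ≤ c →
        (∫ θ in (0:ℝ)..(2 * Real.pi),
            ‖B (((ρ⁻¹ * t : ℝ) : ℂ) * Complex.exp (θ * Complex.I))‖ * (ρ⁻¹ * t))
          ≤ c * t →
        (∫ θ in (0:ℝ)..(2 * Real.pi),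
            ‖A ((ρ : ℂ) * Complex.exp (θ * Complex.I))
              - B ((ρ : ℂ) * Complex.exp (θ * Complex.I))‖ * ρ) ≤ c * t →
        ∀ z : ℂ, t ≤ ‖z‖ → ‖z‖ ≤ 1 →
          ‖A z - B z‖ ≤ C * t / ‖z‖ := by
  have hπ : (0:ℝ) < Real.pi := Real.pi_pos
  have hρ0 : (0:ℝ) < ρ := by linarith
  have ha : (0:ℝ) < ρ - 1 := by linarith
  have hb : (0:ℝ) < 1 - ρ⁻¹ := by
    have : ρ⁻¹ < 1 := inv_lt_one_of_one_lt₀ hρ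
    linarith
  refine ⟨((ρ - 1)⁻¹ * c + (1 - ρ⁻¹)⁻¹ * (2 * c)) / (2 * Real.pi), ?_⟩
  intro t ht ht1 A B hAc hAd hBc hBd _hA hAin _hB hBin hAB z hz1 hz2
  set r : ℝ := ρ⁻¹ * t with hrdef
  have hr0 : 0 < r := by positivity
  have hrt : r < t := by
    have h1 : ρ⁻¹ < 1 := inv_lt_one_of_one_lt₀ hρ
    calc r = ρ⁻¹ * t := rfl
    _ < 1 * t := by nlinarith
    _ = t := one_mul t
  have hzpos : 0 < ‖z‖ := lt_of_lt_of_le ht hz1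
  have hrz : r < ‖z‖ := lt_of_lt_of_le hrt hz1
  have hzρ : ‖z‖ < ρ := lt_of_le_of_lt hz2 hρ
  have hrρ : r ≤ ρ := le_of_lt (lt_trans hrz hzρ)
  set f : ℂ → Matrix (Fin d) (Fin d) ℂ := fun w => A w - B w with hfdef
  have hfapp : ∀ w, f w = A w - B w := fun w => rfl
  have hcm : ∀ (R : ℝ) (θ : ℝ), circleMap 0 R θ = (R : ℂ) * Complex.exp (θ * Complex.I) := by
    intro R θ; simp [circleMap]
  -- set conversions
  have hset1 : {w : ℂ | r ≤ ‖w‖ ∧ ‖w‖ ≤ ρ}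
      = closedBall (0:ℂ) ρ \ ball 0 r := by
    ext w
    simp only [Set.mem_setOf_eq, Set.mem_diff, Metric.mem_closedBall, Metric.mem_ball,
      Complex.dist_eq, sub_zero, not_lt]
    exact ⟨fun h => ⟨h.2, h.1⟩, fun h => ⟨h.2, h.1⟩⟩
  have hset2 : {w : ℂ | r < ‖w‖ ∧ ‖w‖ < ρ}
      = ball (0:ℂ) ρ \ closedBall 0 r := by
    ext w
    simp only [Set.mem_setOf_eq, Set.mem_diff, Metric.mem_closedBall, Metric.mem_ball,
      Complex.dist_eq, sub_zero, not_le]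
    exact ⟨fun h => ⟨h.2, h.1⟩, fun h => ⟨h.2, h.1⟩⟩
  have hopen : IsOpen (ball (0:ℂ) ρ \ closedBall 0 r) :=
    isOpen_ball.sdiff Metric.isClosed_closedBall
  have hopen' : IsOpen {w : ℂ | r < ‖w‖ ∧ ‖w‖ < ρ} := by
    rw [hset2]; exact hopen
  have hz_mem : z ∈ ball (0:ℂ) ρ \ closedBall 0 r := by
    rw [← hset2]; exact ⟨hrz, hzρ⟩
  have hfc : ContinuousOn f (closedBall (0:ℂ) ρ \ ball 0 r) := by
    rw [← hset1]; exact hAc.sub hBc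
  have hfd : ∀ w ∈ ball (0:ℂ) ρ \ closedBall 0 r, DifferentiableAt ℂ f w := by
    intro w hw
    rw [← hset2] at hw
    exact (hAd.sub hBd).differentiableAt (hopen'.mem_nhds hw)
  have hfz : DifferentiableAt ℂ f z := hfd z hz_mem
  have hnhds : closedBall (0:ℂ) ρ \ ball 0 r ∈ nhds z :=
    Filter.mem_of_superset (hopen.mem_nhds hz_mem)
      (Set.diff_subset_diff ball_subset_closedBall ball_subset_closedBall)
  -- spheres inside annulus
  have hsph_outer : sphere (0:ℂ) ρ ⊆ closedBall 0 ρ \ ball 0 r := by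
    rw [← hset1]
    intro w hw
    rw [mem_sphere_zero_iff_norm] at hw
    exact ⟨by rw [hw]; exact hrρ, le_of_eq hw⟩
  have hsph_inner : sphere (0:ℂ) r ⊆ closedBall 0 ρ \ ball 0 r := by
    rw [← hset1]
    intro w hw
    rw [mem_sphere_zero_iff_norm] at hw
    exact ⟨le_of_eq hw.symm, by rw [hw]; exact hrρ⟩
  have houter_ne : ∀ w ∈ sphere (0:ℂ) ρ, w ≠ z := by
    intro w hw h
    rw [mem_sphere_zero_iff_norm, h] at hw
    exact absurd hw (ne_of_lt hzρ)
  have hinner_ne : ∀ w ∈ sphere (0:ℂ) r, w ≠ z := by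
    intro w hw h
    rw [mem_sphere_zero_iff_norm, h] at hw
    exact absurd hw.symm (ne_of_lt hrz)
  -- Cauchy–Goursat on the annulus for the dslope
  have key := Complex.circleIntegral_eq_of_differentiable_on_annulus_off_countable hr0 hrρ
    (Set.countable_singleton z)
    ((continuousOn_dslope hnhds).2 ⟨hfc, hfz⟩)
    (fun w hw => (differentiableAt_dslope_of_ne
      (by simpa using hw.2)).2 (hfd w hw.1))
  -- rewrite both circle integrals of the dslope
  have hIcong : ∀ R : ℝ, 0 < R → (∀ w ∈ sphere (0:ℂ) R, w ≠ z) →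
      ContinuousOn f (sphere (0:ℂ) R) →
      (∮ w in C(0, R), dslope f z w)
        = (∮ w in C(0, R), (w - z)⁻¹ • f w) - (∮ w in C(0, R), (w - z)⁻¹) • f z := by
    intro R hR hne hfcR
    have hinv : ContinuousOn (fun w : ℂ => (w - z)⁻¹) (sphere (0:ℂ) R) :=
      (continuousOn_id.sub continuousOn_const).inv₀
        fun w hw => sub_ne_zero.2 (hne w hw)
    have hgint : CircleIntegrable (fun w => (w - z)⁻¹ • f w) 0 R :=
      (hinv.smul hfcR).circleIntegrable hR.le
    have hhint : CircleIntegrable (fun w => (w - z)⁻¹ • f z) 0 R :=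
      (hinv.smul continuousOn_const).circleIntegrable hR.le
    have hcongr : Set.EqOn (dslope f z)
        (fun w => (w - z)⁻¹ • f w - (w - z)⁻¹ • f z) (sphere (0:ℂ) R) := by
      intro w hw
      rw [dslope_of_ne f (hne w hw), slope_def_module, smul_sub]
    rw [circleIntegral.integral_congr hR.le hcongr,
      circleIntegral.integral_sub hgint hhint, circleIntegral.integral_smul_const]
  have houter := hIcong ρ hρ0 houter_ne (hfc.mono hsph_outer)
  have hinner := hIcong r hr0 hinner_ne (hfc.mono hsph_inner)
  have h2πi : (∮ w in C(0, ρ), (w - z)⁻¹) = 2 * Real.pi * Complex.I :=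
    circleIntegral.integral_sub_inv_of_mem_ball
      (by simpa [Complex.dist_eq] using hzρ)
  have hzero : (∮ w in C(0, r), (w - z)⁻¹) = 0 := by
    have hne : ∀ w ∈ closedBall (0:ℂ) r, w - z ≠ 0 := by
      intro w hw
      rw [Metric.mem_closedBall, Complex.dist_eq, sub_zero] at hw
      exact sub_ne_zero.2 fun h => absurd (h ▸ hw) (not_le.2 hrz)
    refine Complex.circleIntegral_eq_zero_of_differentiable_on_off_countable hr0.le
      Set.countable_empty
      ((continuousOn_id.sub continuousOn_const).inv₀ hne) ?_
    intro w hw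
    exact ((differentiableAt_id.sub_const z).inv
      (hne w (ball_subset_closedBall hw.1)))
  have hkey2 : (2 * Real.pi * Complex.I : ℂ) • f z
      = (∮ w in C(0, ρ), (w - z)⁻¹ • f w) - ∮ w in C(0, r), (w - z)⁻¹ • f w := by
    rw [houter, hinner, h2πi, hzero, zero_smul, sub_zero] at key
    rw [sub_eq_iff_eq_add] at key
    rw [key]; abel
  -- distance bounds on the two circles
  have hdist_outer : ∀ θ : ℝ, ρ - 1 ≤ ‖circleMap 0 ρ θ - z‖ := by
    intro θ
    have h1 : ‖circleMap 0 ρ θ‖ - ‖z‖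
        ≤ ‖circleMap 0 ρ θ - z‖ := by
      simpa using norm_sub_norm_le (circleMap 0 ρ θ) z
    rw [norm_circleMap_zero, _root_.abs_of_pos hρ0] at h1
    linarith
  have hdist_inner : ∀ θ : ℝ,
      (1 - ρ⁻¹) * ‖z‖ ≤ ‖circleMap 0 r θ - z‖ := by
    intro θ
    have h1 : ‖z‖ - ‖circleMap 0 r θ‖
        ≤ ‖z - circleMap 0 r θ‖ := by
      simpa using norm_sub_norm_le z (circleMap 0 r θ)
    rw [norm_circleMap_zero, _root_.abs_of_pos hr0] at h1
    rw [norm_sub_rev] at h1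
    have h2 : ρ⁻¹ * t ≤ ρ⁻¹ * ‖z‖ :=
      mul_le_mul_of_nonneg_left hz1 (by positivity)
    have : (1 - ρ⁻¹) * ‖z‖ ≤ ‖z‖ - r := by
      rw [hrdef]; nlinarith
    linarith
  -- integral bounds
  have hIouter : (∫ θ in (0:ℝ)..(2 * Real.pi), ‖f (circleMap 0 ρ θ)‖ * ρ) ≤ c * t := by
    simp only [hfapp, hcm]
    exact hAB
  have hAc' : ContinuousOn A (closedBall (0:ℂ) ρ \ ball 0 r) := by
    rw [← hset1]; exact hAc
  have hBc' : ContinuousOn B (closedBall (0:ℂ) ρ \ ball 0 r) := by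
    rw [← hset1]; exact hBc
  have hcontA : Continuous fun θ : ℝ => A (circleMap 0 r θ) :=
    (hAc'.mono hsph_inner).comp_continuous (continuous_circleMap 0 r)
      (circleMap_mem_sphere 0 hr0.le)
  have hcontB : Continuous fun θ : ℝ => B (circleMap 0 r θ) :=
    (hBc'.mono hsph_inner).comp_continuous (continuous_circleMap 0 r)
      (circleMap_mem_sphere 0 hr0.le)
  have hIinner : (∫ θ in (0:ℝ)..(2 * Real.pi), ‖f (circleMap 0 r θ)‖ * r)
      ≤ 2 * (c * t) := by
    have hmono : (∫ θ in (0:ℝ)..(2 * Real.pi), ‖f (circleMap 0 r θ)‖ * r)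
        ≤ ∫ θ in (0:ℝ)..(2 * Real.pi),
            (‖A (circleMap 0 r θ)‖ * r + ‖B (circleMap 0 r θ)‖ * r) := by
      refine intervalIntegral.integral_mono_on (by positivity)
        (((hcontA.sub hcontB).norm.mul continuous_const).intervalIntegrable _ _)
        (((hcontA.norm.mul continuous_const).add
          (hcontB.norm.mul continuous_const)).intervalIntegrable _ _)
        fun θ _ => ?_
      have h1 := norm_sub_le (A (circleMap 0 r θ)) (B (circleMap 0 r θ))
      rw [hfapp]
      nlinarith [hr0.le]
    rw [intervalIntegral.integral_add (f := fun θ => ‖A (circleMap 0 r θ)‖ * r)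
      (g := fun θ => ‖B (circleMap 0 r θ)‖ * r)
      ((hcontA.norm.mul continuous_const).intervalIntegrable _ _)
      ((hcontB.norm.mul continuous_const).intervalIntegrable _ _)] at hmono
    have h2 : (∫ θ in (0:ℝ)..(2 * Real.pi), ‖A (circleMap 0 r θ)‖ * r) ≤ c * t := by
      simp only [hcm]; exact hAin
    have h3 : (∫ θ in (0:ℝ)..(2 * Real.pi), ‖B (circleMap 0 r θ)‖ * r) ≤ c * t := by
      simp only [hcm]; exact hBin
    linarith
  -- Cauchy bounds for the two circle integrals
  have hOuterBound : ‖∮ w in C(0, ρ), (w - z)⁻¹ • f w‖ ≤ (ρ - 1)⁻¹ * (c * t) :=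
    cauchy_bound f z hρ0 ha (hfc.mono hsph_outer) hdist_outer hIouter
  have hmInner : 0 < (1 - ρ⁻¹) * ‖z‖ := by positivity
  have hInnerBound : ‖∮ w in C(0, r), (w - z)⁻¹ • f w‖
      ≤ ((1 - ρ⁻¹) * ‖z‖)⁻¹ * (2 * (c * t)) :=
    cauchy_bound f z hr0 hmInner (hfc.mono hsph_inner) hdist_inner hIinner
  have hnorm : ‖(2 * Real.pi * Complex.I : ℂ) • f z‖ = 2 * Real.pi * ‖f z‖ := by
    rw [norm_smul]
    simp [_root_.abs_of_pos hπ]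
  have hmain : 2 * Real.pi * ‖f z‖
      ≤ (ρ - 1)⁻¹ * (c * t) + ((1 - ρ⁻¹) * ‖z‖)⁻¹ * (2 * (c * t)) := by
    rw [← hnorm, hkey2]
    exact (norm_sub_le _ _).trans (add_le_add hOuterBound hInnerBound)
  -- final arithmetic
  have hgoal : ‖f z‖ ≤ ((ρ - 1)⁻¹ * c + (1 - ρ⁻¹)⁻¹ * (2 * c)) / (2 * Real.pi) * t
      / ‖z‖ := by
    rw [le_div_iff₀ hzpos, div_mul_eq_mul_div, le_div_iff₀ (by positivity : (0:ℝ) < 2 * Real.pi)]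
    have hstep2 : 2 * Real.pi * ‖f z‖ * ‖z‖
        ≤ (ρ - 1)⁻¹ * (c * t) * ‖z‖ + (1 - ρ⁻¹)⁻¹ * (2 * (c * t)) := by
      calc 2 * Real.pi * ‖f z‖ * ‖z‖
          ≤ ((ρ - 1)⁻¹ * (c * t)
              + ((1 - ρ⁻¹) * ‖z‖)⁻¹ * (2 * (c * t))) * ‖z‖ :=
            mul_le_mul_of_nonneg_right hmain hzpos.le
        _ = (ρ - 1)⁻¹ * (c * t) * ‖z‖ + (1 - ρ⁻¹)⁻¹ * (2 * (c * t)) := by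
            field_simp
    nlinarith [mul_nonneg (mul_nonneg (inv_nonneg.2 ha.le) hc.le) ht.le,
      norm_nonneg (f z), hz2, hzpos]
  exact hgoal
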